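/- Under the hypotheses in the context, for all x, y ∈ ℝ^d and ξ, η ∈ F one has |g(x+y, ξ+η) − g(x+y, ξ) − g(x, ξ+η) + g(x, ξ) − D_x D_ξ g(x,ξ) η y| ≤ α ‖y‖ ‖η‖ (‖y‖ + ‖η‖). -/

import Mathlib

open Set

/-- second-order Taylor-type estimate for the mixed difference of `g`
(used in the proof of Lemma 5.5 of the paper). -/
theorem mixed_difference_estimate {d : ℕ} {F : Type*}
    [NormedAddCommGroup F] [NormedSpace ℝ F]
    (g : EuclideanSpace ℝ (Fin d) → F → ℝ)
    (Dx : EuclideanSpace ℝ (Fin d) → F → (EuclideanSpace ℝ (Fin d) →L[ℝ] ℝ))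
    (Dξ : EuclideanSpace ℝ (Fin d) → F → (F →L[ℝ] ℝ))
    (Dxξ : EuclideanSpace ℝ (Fin d) → F → F → (EuclideanSpace ℝ (Fin d) →L[ℝ] ℝ))
    (Dξx : EuclideanSpace ℝ (Fin d) → F → EuclideanSpace ℝ (Fin d) → (F →L[ℝ] ℝ))
    (hDx : ∀ (ξ : F) (x : EuclideanSpace ℝ (Fin d)),
      HasFDerivAt (fun x' => g x' ξ) (Dx x ξ) x)
    (hDxCont : ∀ ξ : F, Continuous (fun x => Dx x ξ))
    (hDξ : ∀ (x : EuclideanSpace ℝ (Fin d)) (ξ : F),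
      HasFDerivAt (fun ξ' => g x ξ') (Dξ x ξ) ξ)
    (hDξCont : ∀ x : EuclideanSpace ℝ (Fin d), Continuous (fun ξ => Dξ x ξ))
    (hDxξ : ∀ (ξ ζ : F) (x : EuclideanSpace ℝ (Fin d)),
      HasFDerivAt (fun x' => Dξ x' ξ ζ) (Dxξ x ξ ζ) x)
    (hDξx : ∀ (x z : EuclideanSpace ℝ (Fin d)) (ξ : F),
      HasFDerivAt (fun ξ' => Dx x ξ' z) (Dξx x ξ z) ξ)
    (α : ℝ) (hα : 0 ≤ α)
    (hLipxξ : ∀ (x y z : EuclideanSpace ℝ (Fin d)) (ξ η ζ : F),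
      |Dxξ x ξ ζ z - Dxξ y η ζ z| ≤ α * ‖z‖ * ‖ζ‖ * (‖x - y‖ + ‖ξ - η‖))
    (hLipξx : ∀ (x y z : EuclideanSpace ℝ (Fin d)) (ξ η ζ : F),
      |Dξx x ξ z ζ - Dξx y η z ζ| ≤ α * ‖z‖ * ‖ζ‖ * (‖x - y‖ + ‖ξ - η‖)) :
    ∀ (x y : EuclideanSpace ℝ (Fin d)) (ξ η : F),
      |g (x + y) (ξ + η) - g (x + y) ξ - g x (ξ + η) + g x ξ - Dxξ x ξ η y|
        ≤ α * ‖y‖ * ‖η‖ * (‖y‖ + ‖η‖) := by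
  intro x y ξ η
  set c : ℝ := Dxξ x ξ η y with hc
  set C : ℝ := α * ‖y‖ * ‖η‖ * (‖y‖ + ‖η‖) with hC
  have hAnn : 0 ≤ α * ‖y‖ * ‖η‖ := by positivity
  -- Step A: mean value in the x-direction
  have stepA : ∀ t ∈ Icc (0:ℝ) 1,
      |Dξ (x + y) (ξ + t • η) η - Dξ x (ξ + t • η) η - c| ≤ C := by
    intro t ht
    have key : ∀ s ∈ Icc (0:ℝ) 1,
        HasDerivWithinAt (fun s : ℝ => Dξ (x + s • y) (ξ + t • η) η - s * c)
          (Dxξ (x + s • y) (ξ + t • η) η y - c) (Icc 0 1) s := by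
      intro s hs
      have h1 : HasDerivAt (fun s : ℝ => x + s • y) y s := by
        simpa using ((hasDerivAt_id s).smul_const y).const_add x
      have h2 : HasDerivAt (fun s : ℝ => Dξ (x + s • y) (ξ + t • η) η)
          (Dxξ (x + s • y) (ξ + t • η) η y) s := by
        have := (hDxξ (ξ + t • η) η (x + s • y)).comp_hasDerivAt s h1; exact this
      exact (h2.sub ((hasDerivAt_mul_const c))).hasDerivWithinAt
    have bound : ∀ s ∈ Icc (0:ℝ) 1,
        ‖Dxξ (x + s • y) (ξ + t • η) η y - c‖ ≤ C := by
      intro s hs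
      rw [Real.norm_eq_abs, hc]
      calc |Dxξ (x + s • y) (ξ + t • η) η y - Dxξ x ξ η y|
          ≤ α * ‖y‖ * ‖η‖ * (‖x + s • y - x‖ + ‖ξ + t • η - ξ‖) :=
            hLipxξ (x + s • y) x y (ξ + t • η) ξ η
        _ ≤ C := by
            rw [hC]
            apply mul_le_mul_of_nonneg_left _ hAnn
            have h1 : ‖x + s • y - x‖ ≤ ‖y‖ := by
              simp only [add_sub_cancel_left, norm_smul, Real.norm_eq_abs]
              calc |s| * ‖y‖ ≤ 1 * ‖y‖ := by
                    apply mul_le_mul_of_nonneg_right _ (norm_nonneg y)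
                    rw [abs_le]; exact ⟨by linarith [hs.1], hs.2⟩
                _ = ‖y‖ := one_mul _
            have h2 : ‖ξ + t • η - ξ‖ ≤ ‖η‖ := by
              simp only [add_sub_cancel_left, norm_smul, Real.norm_eq_abs]
              calc |t| * ‖η‖ ≤ 1 * ‖η‖ := by
                    apply mul_le_mul_of_nonneg_right _ (norm_nonneg η)
                    rw [abs_le]; exact ⟨by linarith [ht.1], ht.2⟩
                _ = ‖η‖ := one_mul _
            linarith
    have := (convex_Icc (0:ℝ) 1).norm_image_sub_le_of_norm_hasDerivWithin_le
      key bound (left_mem_Icc.2 zero_le_one) (right_mem_Icc.2 zero_le_one)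
    simp only [one_smul, zero_smul, add_zero, zero_mul, sub_zero, one_mul,
      Real.norm_eq_abs, abs_one, mul_one] at this
    convert this using 2
    ring
  -- Step B: mean value in the ξ-direction
  have key2 : ∀ t ∈ Icc (0:ℝ) 1,
      HasDerivWithinAt (fun t : ℝ => g (x + y) (ξ + t • η) - g x (ξ + t • η) - t * c)
        (Dξ (x + y) (ξ + t • η) η - Dξ x (ξ + t • η) η - c) (Icc 0 1) t := by
    intro t ht
    have h1 : HasDerivAt (fun t : ℝ => ξ + t • η) η t := by
      simpa using ((hasDerivAt_id t).smul_const η).const_add ξ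
    have h2 : HasDerivAt (fun t : ℝ => g (x + y) (ξ + t • η))
        (Dξ (x + y) (ξ + t • η) η) t :=
      (hDξ (x + y) (ξ + t • η)).comp_hasDerivAt t h1
    have h3 : HasDerivAt (fun t : ℝ => g x (ξ + t • η))
        (Dξ x (ξ + t • η) η) t :=
      (hDξ x (ξ + t • η)).comp_hasDerivAt t h1
    exact ((h2.sub h3).sub (hasDerivAt_mul_const c)).hasDerivWithinAt
  have bound2 : ∀ t ∈ Icc (0:ℝ) 1,
      ‖Dξ (x + y) (ξ + t • η) η - Dξ x (ξ + t • η) η - c‖ ≤ C := by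
    intro t ht
    rw [Real.norm_eq_abs]
    exact stepA t ht
  have final := (convex_Icc (0:ℝ) 1).norm_image_sub_le_of_norm_hasDerivWithin_le
    key2 bound2 (left_mem_Icc.2 zero_le_one) (right_mem_Icc.2 zero_le_one)
  simp only [one_smul, zero_smul, add_zero, zero_mul, sub_zero, one_mul,
    Real.norm_eq_abs, abs_one, mul_one] at final
  rw [hC] at final ⊢
  convert final using 2
  ring
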